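/- For any probability measure κ on [0,∞) which is not equal to the Dirac mass δ₀ and whose moments of all orders are finite, there exists a constant a = a(κ) > 0 such that for every pair of integers m, n ∈ ℕ, ∫₀^∞ (r + a)^m (r − a)^n dκ(r) ≥ 0. -/

import Mathlib

/-!
Statement 10: every probability measure on `[0,∞)` with finite moments which is not `δ₀`
satisfies Wells' condition for some `a > 0` (Proposition 3.3 of the paper).
-/

open MeasureTheory

lemma integrable_poly_aux (κ : Measure ℝ)
    (hmom : ∀ k : ℕ, Integrable (fun t : ℝ => t ^ k) κ) (p : Polynomial ℝ) :
    Integrable (fun t => p.eval t) κ := by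
  have h : (fun t : ℝ => p.eval t)
      = fun t => ∑ i ∈ Finset.range (p.natDegree + 1), p.coeff i * t ^ i := by
    funext t; rw [Polynomial.eval_eq_sum_range]
  rw [h]
  exact integrable_finset_sum _ fun i _ => (hmom i).const_mul _

lemma integrable_wells (κ : Measure ℝ)
    (hmom : ∀ k : ℕ, Integrable (fun t : ℝ => t ^ k) κ) (a : ℝ) (m n : ℕ) :
    Integrable (fun t : ℝ => (t + a) ^ m * (t - a) ^ n) κ := by
  have h : (fun t : ℝ => (t + a) ^ m * (t - a) ^ n)
      = fun t => ((Polynomial.X + Polynomial.C a) ^ m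
        * (Polynomial.X - Polynomial.C a) ^ n).eval t := by
    funext t; simp
  rw [h]
  exact integrable_poly_aux κ hmom _

/-- For any Borel probability measure `κ` supported on `[0,∞)`, with
finite moments of all orders and not equal to the Dirac mass at `0`, there exists
`a = a(κ) > 0` such that `∫₀^∞ (r+a)^m (r-a)^n dκ(r) ≥ 0` for all `m, n ∈ ℕ`. -/
theorem wells_condition_of_ne_dirac (κ : Measure ℝ) [IsProbabilityMeasure κ]
    (hsupp : κ (Set.Iio 0) = 0)
    (hmom : ∀ k : ℕ, Integrable (fun t : ℝ => t ^ k) κ)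
    (hne : κ ≠ Measure.dirac 0) :
    ∃ a > (0:ℝ), ∀ m n : ℕ, 0 ≤ ∫ t, (t + a) ^ m * (t - a) ^ n ∂κ := by
  -- Step 1: κ (Ioi 0) ≠ 0
  have hIoi : κ (Set.Ioi 0) ≠ 0 := by
    intro h0
    apply hne
    have hcompl : κ ({(0:ℝ)}ᶜ) = 0 := by
      have : ({(0:ℝ)}ᶜ : Set ℝ) = Set.Iio 0 ∪ Set.Ioi 0 := by
        ext x
        simp only [Set.mem_compl_iff, Set.mem_singleton_iff, Set.mem_union, Set.mem_Iio,
          Set.mem_Ioi]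
        exact ⟨fun h => lt_or_gt_of_ne h, fun h => h.elim (fun h => h.ne) (fun h => h.ne')⟩
      rw [this]
      exact le_antisymm (le_trans (measure_union_le _ _) (by simp [hsupp, h0])) zero_le
    have h0mem : κ {(0:ℝ)} = 1 := by
      have := measure_add_measure_compl (μ := κ) (s := {(0:ℝ)}) (measurableSet_singleton 0)
      rw [hcompl, add_zero] at this
      simpa using this
    ext s hs
    rw [Measure.dirac_apply' _ hs]
    have : κ s = κ (s ∩ {0}) := by
      have h1 : κ (s \ {0}) = 0 :=
        measure_mono_null (Set.diff_subset_compl s {0}) hcompl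
      have := measure_inter_add_diff (μ := κ) s (measurableSet_singleton (0:ℝ))
      rw [h1, add_zero] at this
      exact this.symm
    rw [this]
    by_cases h0s : (0:ℝ) ∈ s
    · have : s ∩ {0} = {0} := by
        ext x; simp (config := {contextual := true}) [h0s]
      rw [this, h0mem]
      simp [Set.indicator_of_mem h0s]
    · have : s ∩ {(0:ℝ)} = ∅ := by
        ext x; simp (config := {contextual := true}) [h0s]
      rw [this]
      simp [Set.indicator_of_notMem h0s]
  -- Step 2: find ε > 0 with κ (Ici ε) ≠ 0
  obtain ⟨ε, hεpos, hεne⟩ : ∃ ε > (0:ℝ), κ (Set.Ici ε) ≠ 0 := by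
    by_contra hc
    push_neg at hc
    apply hIoi
    have hU : Set.Ioi (0:ℝ) ⊆ ⋃ k : ℕ, Set.Ici (((k:ℝ)+1)⁻¹) := by
      intro t ht
      obtain ⟨k, hk⟩ := exists_nat_gt t⁻¹
      refine Set.mem_iUnion.mpr ⟨k, ?_⟩
      have h1 : (0:ℝ) < t := ht
      have h2 : t⁻¹ < (k:ℝ) + 1 := hk.trans (by linarith)
      have : ((k:ℝ)+1)⁻¹ ≤ t := by
        rw [inv_le_comm₀ (by positivity) h1]
        exact h2.le
      exact this
    refine measure_mono_null hU ?_
    exact measure_iUnion_null fun k => hc _ (by positivity)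
  -- Step 3: pick a
  set δ : ℝ := min (κ (Set.Ici ε)).toReal 1 with hδ
  have hfin : κ (Set.Ici ε) ≠ ⊤ := measure_ne_top κ _
  have hδpos : 0 < δ := by
    apply lt_min _ one_pos
    exact ENNReal.toReal_pos hεne hfin
  have hδle1 : δ ≤ 1 := min_le_right _ _
  have hδleκ : δ ≤ (κ (Set.Ici ε)).toReal := min_le_left _ _
  refine ⟨δ * ε / 4, by positivity, ?_⟩
  set a : ℝ := δ * ε / 4 with ha
  have hapos : 0 < a := by positivity
  have haε : a ≤ ε / 2 := by
    rw [ha]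
    nlinarith [hδle1, hεpos]
  intro m n
  set f : ℝ → ℝ := fun t => (t + a) ^ m * (t - a) ^ n with hf
  have hfint : Integrable f κ := integrable_wells κ hmom a m n
  have hfcont : Continuous f := by fun_prop
  -- split the integral
  have hsplit : ∫ t, f t ∂κ
      = (∫ t in Set.Iio 0, f t ∂κ) + (∫ t in Set.Ico 0 a, f t ∂κ)
        + (∫ t in Set.Ico a ε, f t ∂κ) + (∫ t in Set.Ici ε, f t ∂κ) := by
    have h1 : ∫ t in Set.Ico a ε ∪ Set.Ici ε, f t ∂κ
        = (∫ t in Set.Ico a ε, f t ∂κ) + (∫ t in Set.Ici ε, f t ∂κ) :=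
      setIntegral_union (Set.disjoint_left.mpr fun x hx hx2 => hx.2.not_ge hx2) measurableSet_Ici
        hfint.integrableOn hfint.integrableOn
    have e1 : Set.Ico a ε ∪ Set.Ici ε = Set.Ici a := Set.Ico_union_Ici_eq_Ici (by linarith)
    rw [e1] at h1
    have h2 : ∫ t in Set.Ico 0 a ∪ Set.Ici a, f t ∂κ
        = (∫ t in Set.Ico 0 a, f t ∂κ) + (∫ t in Set.Ici a, f t ∂κ) :=
      setIntegral_union (Set.disjoint_left.mpr fun x hx hx2 => hx.2.not_ge hx2) measurableSet_Ici
        hfint.integrableOn hfint.integrableOn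
    have e2 : Set.Ico 0 a ∪ Set.Ici a = Set.Ici 0 := Set.Ico_union_Ici_eq_Ici hapos.le
    rw [e2] at h2
    have h3 : ∫ t in Set.Iio 0 ∪ Set.Ici 0, f t ∂κ
        = (∫ t in Set.Iio 0, f t ∂κ) + (∫ t in Set.Ici 0, f t ∂κ) :=
      setIntegral_union (Set.disjoint_left.mpr fun x hx hx2 => hx.not_ge (Set.mem_Ici.mp hx2)) measurableSet_Ici
        hfint.integrableOn hfint.integrableOn
    rw [Set.Iio_union_Ici, Measure.restrict_univ] at h3
    rw [h3, h2, h1]; ring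
  have hI0 : ∫ t in Set.Iio 0, f t ∂κ = 0 := by
    rw [Measure.restrict_eq_zero.mpr hsupp]
    exact integral_zero_measure f
  -- middle piece nonneg
  have hI2 : 0 ≤ ∫ t in Set.Ico a ε, f t ∂κ := by
    apply setIntegral_nonneg measurableSet_Ico
    intro x hx
    apply mul_nonneg (pow_nonneg (by linarith [hx.1]) _) (pow_nonneg (by linarith [hx.1]) _)
  by_cases hk0 : m = 0 ∧ n = 0
  · obtain ⟨rfl, rfl⟩ := hk0
    simp [hf]
  -- main estimates, k := m + n ≥ 1
  have hk1 : 1 ≤ m + n := by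
    rcases Nat.eq_zero_or_pos (m + n) with h | h
    · exact absurd ⟨Nat.eq_zero_of_add_eq_zero_right h, Nat.eq_zero_of_add_eq_zero_left h⟩ hk0
    · exact h
  have hI1 : -(2*a)^(m+n) ≤ ∫ t in Set.Ico 0 a, f t ∂κ := by
    have hbound : ∀ x ∈ Set.Ico (0:ℝ) a, ‖f x‖ ≤ (2*a)^(m+n) := by
      intro x hx
      rw [hf]
      obtain ⟨hx1, hx2⟩ := hx
      have h1 : |x + a| ≤ 2*a := by rw [abs_le]; constructor <;> linarith
      have h2 : |x - a| ≤ 2*a := by rw [abs_le]; constructor <;> linarith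
      calc ‖(x + a) ^ m * (x - a) ^ n‖ = |x+a|^m * |x-a|^n := by
            rw [norm_mul, norm_pow, norm_pow]; rfl
        _ ≤ (2*a)^m * (2*a)^n := by
            apply mul_le_mul (pow_le_pow_left₀ (abs_nonneg _) h1 m)
              (pow_le_pow_left₀ (abs_nonneg _) h2 n) (by positivity) (by positivity)
        _ = (2*a)^(m+n) := (pow_add _ _ _).symm
    have hnorm := norm_setIntegral_le_of_norm_le_const
      (show κ (Set.Ico 0 a) < ⊤ from (measure_ne_top κ _).lt_top) hbound
    have hμle : (κ (Set.Ico 0 a)).toReal ≤ 1 := by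
      have h := prob_le_one (μ := κ) (s := Set.Ico 0 a)
      have h2 := ENNReal.toReal_mono ENNReal.one_ne_top h
      simpa using h2
    have h2a : (0:ℝ) ≤ (2*a)^(m+n) := by positivity
    have habs : |(∫ t in Set.Ico 0 a, f t ∂κ)| ≤ (2*a)^(m+n) := by
      rw [← Real.norm_eq_abs]
      calc ‖∫ t in Set.Ico 0 a, f t ∂κ‖ ≤ (2*a)^(m+n) * (κ (Set.Ico 0 a)).toReal := hnorm
        _ ≤ (2*a)^(m+n) * 1 := mul_le_mul_of_nonneg_left hμle h2a
        _ = (2*a)^(m+n) := mul_one _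
    exact (abs_le.mp habs).1
  have hI3 : (ε/2)^(m+n) * (κ (Set.Ici ε)).toReal ≤ ∫ t in Set.Ici ε, f t ∂κ := by
    apply setIntegral_ge_of_const_le_real measurableSet_Ici hfin _ hfint.integrableOn
    intro x hx
    have hx' : ε ≤ x := hx
    have h1 : ε/2 ≤ x + a := by linarith
    have h2 : ε/2 ≤ x - a := by linarith
    calc (ε/2)^(m+n) = (ε/2)^m * (ε/2)^n := pow_add _ _ _
      _ ≤ (x+a)^m * (x-a)^n :=
          mul_le_mul (pow_le_pow_left₀ (by positivity) h1 m)
            (pow_le_pow_left₀ (by positivity) h2 n) (by positivity)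
            (pow_nonneg (by linarith) m)
  -- combine
  have hkey : (2*a)^(m+n) ≤ (ε/2)^(m+n) * (κ (Set.Ici ε)).toReal := by
    have hδε : 2*a ≤ δ * (ε/2) := le_of_eq (by rw [ha]; ring)
    calc (2*a)^(m+n) ≤ (δ * (ε/2))^(m+n) :=
          pow_le_pow_left₀ (by positivity) hδε _
      _ = δ^(m+n) * (ε/2)^(m+n) := mul_pow _ _ _
      _ ≤ δ * (ε/2)^(m+n) := by
          apply mul_le_mul_of_nonneg_right _ (by positivity)
          exact pow_le_of_le_one hδpos.le hδle1 (by omega)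
      _ ≤ (κ (Set.Ici ε)).toReal * (ε/2)^(m+n) := by
          apply mul_le_mul_of_nonneg_right hδleκ (by positivity)
      _ = (ε/2)^(m+n) * (κ (Set.Ici ε)).toReal := mul_comm _ _
  show 0 ≤ ∫ t, f t ∂κ
  rw [hsplit, hI0]
  linarith
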